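/- For all integers g ≥ 2, the quantity (2^{2g}−1)(g+1)·13 − 2·((2^{2g-1}−2)(6g+18) + (6g+18)) − 3·(2^{2g-2}(6g+18)) is negative if and only if g ≤ 7. -/

import Mathlib

/-- For integers `g ≥ 2`, the intersection number of the lifted Lefschetz pencil with
the canonical class, `(2^{2g}−1)(g+1)·13 − 2((2^{2g-1}−2)(6g+18) + (6g+18))
− 3·2^{2g-2}(6g+18)`, is negative if and only if `g ≤ 7`. -/
theorem pencil_canonical_negative (g : ℕ) (hg : 2 ≤ g) :
    (((2 ^ (2 * g) : ℤ) - 1) * ((g : ℤ) + 1) * 13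
      - 2 * (((2 ^ (2 * g - 1) : ℤ) - 2) * (6 * (g : ℤ) + 18) + (6 * (g : ℤ) + 18))
      - 3 * ((2 ^ (2 * g - 2) : ℤ) * (6 * (g : ℤ) + 18)) < 0) ↔ g ≤ 7 := by
  obtain ⟨k, rfl⟩ := Nat.exists_eq_add_of_le hg
  have e1 : 2 * (2 + k) = 2 * k + 4 := by omega
  have e2 : 2 * k + 4 - 1 = 2 * k + 3 := by omega
  have e3 : 2 * k + 4 - 2 = 2 * k + 2 := by omega
  rw [e1, e2, e3]
  constructor
  · intro h
    by_contra hk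
    push_neg at hk
    have hk6 : 6 ≤ k := by omega
    have hp : (k : ℤ) < 2 ^ (2 * k + 2) := by
      have h1 : k < 2 ^ k := Nat.lt_two_pow_self (n := k)
      have h2 : (2:ℕ) ^ k ≤ 2 ^ (2 * k + 2) := Nat.pow_le_pow_right (by norm_num) (by omega)
      exact_mod_cast lt_of_lt_of_le h1 h2
    have hk6' : (6 : ℤ) ≤ (k : ℤ) := by exact_mod_cast hk6
    have hexp1 : (2:ℤ) ^ (2 * k + 3) = 2 ^ (2 * k + 2) * 2 := by ring
    have hexp2 : (2:ℤ) ^ (2 * k + 4) = 2 ^ (2 * k + 2) * 4 := by ring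
    rw [hexp1, hexp2] at h
    push_cast at h
    nlinarith [h, hp, hk6']
  · intro h
    have hk : k ≤ 5 := by omega
    interval_cases k <;> norm_num
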